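/- Let h : ℝⁿ → ℝ be continuously differentiable and let α : ℝ → ℝ be an extended class-K∞ function that is locally Lipschitz continuous. Let φ : ℝ_{≥0} → ℝⁿ be a continuously differentiable curve such that ⟨∇h(φ(t)), φ'(t)⟩ ≥ −α(h(φ(t))) for all t ≥ 0 and h(φ(0)) ≥ 0. Then h(φ(t)) ≥ 0 for all t ≥ 0; i.e., the 0-superlevel set C = {x ∈ ℝⁿ : h(x) ≥ 0} is forward invariant along φ. -/

import Mathlib

open scoped RealInnerProductSpace

/-- forward invariance of the 0-superlevel set of `h` along a
continuously differentiable curve satisfying the zeroing CBF differential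
inequality `⟪∇h(φ(t)), φ'(t)⟫ ≥ -α(h(φ(t)))` with a locally Lipschitz extended
class-K∞ function `α`. -/
theorem stmt_2 {n : ℕ}
    (h : EuclideanSpace ℝ (Fin n) → ℝ)
    (hh : ContDiff ℝ 1 h)
    (α : ℝ → ℝ)
    (hαcont : Continuous α)
    (hαmono : StrictMono α)
    (hα0 : α 0 = 0)
    (hαtop : Filter.Tendsto α Filter.atTop Filter.atTop)
    (hαbot : Filter.Tendsto α Filter.atBot Filter.atBot)
    (hαlip : LocallyLipschitz α)
    (φ φ' : ℝ → EuclideanSpace ℝ (Fin n))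
    (hφ : ∀ t : ℝ, 0 ≤ t → HasDerivAt φ (φ' t) t)
    (hφ'cont : ContinuousOn φ' (Set.Ici 0))
    (hineq : ∀ t : ℝ, 0 ≤ t → ⟪gradient h (φ t), φ' t⟫ ≥ -α (h (φ t)))
    (h0 : h (φ 0) ≥ 0) :
    ∀ t : ℝ, 0 ≤ t → h (φ t) ≥ 0 := by
  intro t ht
  by_contra hneg
  push_neg at hneg
  set y : ℝ → ℝ := fun s => h (φ s) with hy
  have hyder : ∀ s : ℝ, 0 ≤ s → HasDerivAt y (⟪gradient h (φ s), φ' s⟫) s := by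
    intro s hs
    have hg : HasGradientAt h (gradient h (φ s)) (φ s) :=
      (hh.differentiable one_ne_zero (φ s)).hasGradientAt
    have := hg.hasFDerivAt.comp_hasDerivAt s (hφ s hs)
    convert this using 1
    · rfl
    · rfl
    · rfl
    · simp [InnerProductSpace.toDual_apply_apply]
  have hycont : ContinuousOn y (Set.Icc 0 t) := fun s hs =>
    ((hyder s hs.1).continuousAt).continuousWithinAt
  set S := {s : ℝ | s ∈ Set.Icc 0 t ∧ 0 ≤ y s} with hS
  have hSsub : S ⊆ Set.Icc 0 t := fun s hs => hs.1
  have hS0 : (0 : ℝ) ∈ S := ⟨⟨le_refl 0, ht⟩, h0⟩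
  have hScl : IsClosed S := by
    have : S = Set.Icc 0 t ∩ y ⁻¹' Set.Ici 0 := by
      ext s; simp [hS, Set.mem_setOf_eq, and_comm]
    rw [this]
    exact hycont.preimage_isClosed_of_isClosed isClosed_Icc isClosed_Ici
  have hScomp : IsCompact S :=
    (isCompact_Icc : IsCompact (Set.Icc (0:ℝ) t)).of_isClosed_subset hScl hSsub
  have hSne : S.Nonempty := ⟨0, hS0⟩
  obtain hs₀ := hScomp.sSup_mem hSne
  set s₀ := sSup S with hs₀def
  have hs₀0 : 0 ≤ s₀ := hs₀.1.1
  have hs₀t : s₀ ≤ t := hs₀.1.2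
  have hs₀lt : s₀ < t := by
    rcases lt_or_eq_of_le hs₀t with h' | h'
    · exact h'
    · exfalso; have := hs₀.2; rw [h'] at this; linarith
  have hbdd : BddAbove S := hScomp.bddAbove
  have hIoc : ∀ u ∈ Set.Ioc s₀ t, y u < 0 := by
    intro u hu
    by_contra hyu
    push_neg at hyu
    have : u ∈ S := ⟨⟨le_trans hs₀0 hu.1.le, hu.2⟩, hyu⟩
    exact absurd (le_csSup hbdd this) (not_le.mpr hu.1)
  have hmono : MonotoneOn y (Set.Icc s₀ t) := by
    apply monotoneOn_of_deriv_nonneg (convex_Icc s₀ t)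
    · exact hycont.mono (Set.Icc_subset_Icc hs₀0 le_rfl)
    · intro u hu
      rw [interior_Icc] at hu
      exact ((hyder u (le_trans hs₀0 hu.1.le)).differentiableAt).differentiableWithinAt
    · intro u hu
      rw [interior_Icc] at hu
      have hu0 : 0 ≤ u := le_trans hs₀0 hu.1.le
      rw [(hyder u hu0).deriv]
      have h1 : y u < 0 := hIoc u ⟨hu.1, hu.2.le⟩
      have h2 : α (y u) < 0 := by
        have := hαmono h1
        rwa [hα0] at this
      have h3 := hineq u hu0
      change α (h (φ u)) < 0 at h2
      linarith
  have hfin : y s₀ ≤ y t := hmono ⟨le_rfl, hs₀t⟩ ⟨hs₀t, le_rfl⟩ hs₀t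
  have := hs₀.2
  simp only [hy] at hfin this
  linarith
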